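/- Any finite family of subtrees of a tree has the Helly property: if the subtrees pairwise intersect, then they have a common vertex. -/

import Mathlib

open SimpleGraph

namespace HellyAux

variable {W : Type*} [DecidableEq W] {T : SimpleGraph W}

/-- the canonical path between two vertices of a tree -/
noncomputable def tpath (hT : T.IsTree) (x y : W) : T.Path x y :=
  ((hT.isConnected.preconnected x y).some).toPath

lemma path_eq_tpath (hT : T.IsTree) {x y : W} (p : T.Path x y) : p = tpath hT x y :=
  (isAcyclic_iff_path_unique.mp hT.IsAcyclic) p _

lemma tpath_support_subset (hT : T.IsTree) {x y : W} (w : T.Walk x y) :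
    (tpath hT x y : T.Walk x y).support ⊆ w.support := by
  have h1 : w.toPath = tpath hT x y := path_eq_tpath hT _
  have := w.support_toPath_subset
  rw [h1] at this
  exact this

/-- A set closed under canonical paths. -/
def PathClosed (hT : T.IsTree) (A : Set W) : Prop :=
  ∀ ⦃x⦄, x ∈ A → ∀ ⦃y⦄, y ∈ A → ∀ ⦃z⦄,
    z ∈ (tpath hT x y : T.Walk x y).support → z ∈ A

lemma PathClosed.inter {hT : T.IsTree} {A B : Set W} (hA : PathClosed hT A)
    (hB : PathClosed hT B) : PathClosed hT (A ∩ B) :=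
  fun _ hx _ hy _ hz => ⟨hA hx.1 hy.1 hz, hB hx.2 hy.2 hz⟩

/-- the obvious hom from an induced subgraph -/
def inducedHom (A : Set W) : T.induce A →g T where
  toFun := Subtype.val
  map_rel' := fun h => h

lemma pathClosed_of_connected (hT : T.IsTree) {A : Set W}
    (hA : (T.induce A).Connected) : PathClosed hT A := by
  intro x hx y hy z hz
  obtain ⟨w⟩ := hA.preconnected ⟨x, hx⟩ ⟨y, hy⟩
  have hsub : (tpath hT x y : T.Walk x y).support ⊆ (w.map (inducedHom A)).support :=
    tpath_support_subset hT _
  have := hsub hz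
  rw [Walk.support_map, List.mem_map] at this
  obtain ⟨⟨z', hz'⟩, _, rfl⟩ := this
  exact hz'

lemma switch {a b : W} (p : T.Walk a b) (X : Set W) (ha : a ∈ X) (hb : b ∉ X) :
    ∃ u v, T.Adj u v ∧ u ∈ X ∧ v ∉ X ∧ u ∈ p.support ∧ v ∈ p.support := by
  induction p with
  | nil => exact absurd ha hb
  | @cons a c b h p ih =>
    by_cases hc : c ∈ X
    · obtain ⟨u, v, h1, h2, h3, h4, h5⟩ := ih hc hb
      exact ⟨u, v, h1, h2, h3, by simp [h4], by simp [h5]⟩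
    · exact ⟨a, c, h, ha, hc, by simp, by simp⟩

lemma isPath_concat {x y z : W} {p : T.Walk x y} (hp : p.IsPath) (h : T.Adj y z)
    (hz : z ∉ p.support) : (p.concat h).IsPath := by
  rw [← Walk.isPath_reverse_iff, Walk.reverse_concat]
  exact hp.reverse.cons (by simpa [Walk.support_reverse] using hz)

lemma median (hT : T.IsTree) (a b c : W) :
    ∃ m, m ∈ (tpath hT a b : T.Walk a b).support ∧
      m ∈ (tpath hT c a : T.Walk c a).support ∧
      m ∈ (tpath hT c b : T.Walk c b).support := by
  set Pab := (tpath hT a b : T.Walk a b) with hPab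
  set Pca := (tpath hT c a : T.Walk c a) with hPca
  set Pcb := (tpath hT c b : T.Walk c b) with hPcb
  have hcover : ∀ z ∈ Pab.support, z ∈ Pca.support ∨ z ∈ Pcb.support := by
    intro z hz
    have := tpath_support_subset hT (Pca.reverse.append Pcb) hz
    rw [Walk.mem_support_append_iff, Walk.support_reverse, List.mem_reverse] at this
    exact this
  by_cases hb : b ∈ Pca.support
  · exact ⟨b, Pab.end_mem_support, hb, Pcb.end_mem_support⟩
  · obtain ⟨u, v, hadj, huX, hvX, hup, hvp⟩ :=
      switch Pab {z | z ∈ Pca.support} Pca.end_mem_support hb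
    have hvPcb : v ∈ Pcb.support := (hcover v hvp).resolve_left hvX
    have hpu : (Pca.takeUntil u huX).IsPath := (tpath hT c a).2.takeUntil huX
    have hvpu : v ∉ (Pca.takeUntil u huX).support := fun hmem =>
      hvX (Pca.support_takeUntil_subset huX hmem)
    have hApath : ((Pca.takeUntil u huX).concat hadj).IsPath := isPath_concat hpu hadj hvpu
    have hq : (Pcb.takeUntil v hvPcb).IsPath := (tpath hT c b).2.takeUntil hvPcb
    have heq : (⟨_, hApath⟩ : T.Path c v) = ⟨_, hq⟩ := by
      rw [path_eq_tpath hT (⟨_, hApath⟩ : T.Path c v), path_eq_tpath hT (⟨_, hq⟩ : T.Path c v)]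
    have hsupp : ((Pca.takeUntil u huX).concat hadj).support = (Pcb.takeUntil v hvPcb).support :=
      congrArg (fun p : T.Path c v => (p : T.Walk c v).support) heq
    have huA : u ∈ ((Pca.takeUntil u huX).concat hadj).support := by
      rw [Walk.support_concat, List.mem_append]
      exact Or.inl (Pca.takeUntil u huX).end_mem_support
    have : u ∈ Pcb.support := Pcb.support_takeUntil_subset hvPcb (hsupp ▸ huA)
    exact ⟨u, hup, huX, this⟩

lemma helly3 (hT : T.IsTree) {A B C : Set W} (hA : PathClosed hT A) (hB : PathClosed hT B)
    (hC : PathClosed hT C) (hAB : (A ∩ B).Nonempty) (hAC : (A ∩ C).Nonempty)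
    (hBC : (B ∩ C).Nonempty) : (A ∩ B ∩ C).Nonempty := by
  obtain ⟨c, hcA, hcB⟩ := hAB
  obtain ⟨b, hbA, hbC⟩ := hAC
  obtain ⟨a, haB, haC⟩ := hBC
  obtain ⟨m, hm1, hm2, hm3⟩ := median hT a b c
  exact ⟨m, ⟨⟨hA hcA hbA hm3, hB hcB haB hm2⟩, hC haC hbC hm1⟩⟩
  -- hm3 : m ∈ tpath c b ; hm2 : m ∈ tpath c a ; hm1 : m ∈ tpath a b

lemma helly_finset (hT : T.IsTree) : ∀ (n : ℕ) (F : Finset (Set W)), F.card ≤ n →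
    F.Nonempty → (∀ A ∈ F, PathClosed hT A) →
    (∀ A ∈ F, ∀ B ∈ F, (A ∩ B).Nonempty) → (⋂₀ (F : Set (Set W))).Nonempty := by
  classical
  intro n
  induction n with
  | zero => intro F hcard hne _ _; simp [Finset.card_eq_zero.mp (Nat.le_zero.mp hcard)] at hne
  | succ n ih =>
    intro F hcard hne hcl hp
    obtain ⟨A, hA⟩ := hne
    by_cases h1 : F = {A}
    · subst h1
      obtain ⟨x, hx, _⟩ := hp A (by simp) A (by simp)
      exact ⟨x, by simpa using hx⟩
    · have hEne : (F.erase A).Nonempty := by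
        by_contra h
        rw [Finset.not_nonempty_iff_eq_empty, Finset.erase_eq_empty_iff] at h
        rcases h with h | h
        · rw [h] at hA; simp at hA
        · exact h1 h
      have hcard' : ((F.erase A).image (· ∩ A)).card ≤ n := by
        calc ((F.erase A).image (· ∩ A)).card ≤ (F.erase A).card := Finset.card_image_le
        _ = F.card - 1 := by rw [Finset.card_erase_of_mem hA]
        _ ≤ n := by omega
      have hcl' : ∀ B ∈ (F.erase A).image (· ∩ A), PathClosed hT B := by
        intro B hB
        obtain ⟨C, hC, rfl⟩ := Finset.mem_image.mp hB
        exact (hcl C (Finset.mem_of_mem_erase hC)).inter (hcl A hA)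
      have hp' : ∀ B ∈ (F.erase A).image (· ∩ A), ∀ C ∈ (F.erase A).image (· ∩ A),
          (B ∩ C).Nonempty := by
        intro B hB C hC
        obtain ⟨B', hB', rfl⟩ := Finset.mem_image.mp hB
        obtain ⟨C', hC', rfl⟩ := Finset.mem_image.mp hC
        have hB'' := Finset.mem_of_mem_erase hB'
        have hC'' := Finset.mem_of_mem_erase hC'
        obtain ⟨x, ⟨⟨hx1, hx2⟩, hx3⟩⟩ := helly3 hT (hcl B' hB'') (hcl C' hC'') (hcl A hA)
          (hp B' hB'' C' hC'') (hp B' hB'' A hA) (hp C' hC'' A hA)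
        exact ⟨x, ⟨hx1, hx3⟩, ⟨hx2, hx3⟩⟩
      obtain ⟨x, hx⟩ := ih ((F.erase A).image (· ∩ A)) hcard' (hEne.image _) hcl' hp'
      have hmem : ∀ B ∈ F.erase A, x ∈ B ∩ A := fun B hB =>
        hx (B ∩ A) (Finset.mem_coe.mpr (Finset.mem_image_of_mem _ hB))
      refine ⟨x, ?_⟩
      intro B hB
      by_cases hBA : B = A
      · subst hBA
        obtain ⟨C, hC⟩ := hEne
        exact (hmem C hC).2
      · exact (hmem B (Finset.mem_erase.mpr ⟨hBA, hB⟩)).1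

end HellyAux

open SimpleGraph

/-- A subtree model of `G` on a tree `T`: each vertex gets a nonempty connected
subtree, and subtrees of distinct vertices intersect iff the vertices are adjacent. -/
def IsSubtreeModel {V W : Type*} (G : SimpleGraph V) (T : SimpleGraph W) (S : V → Set W) : Prop :=
  T.IsTree ∧ (∀ v : V, (T.induce (S v)).Connected) ∧
    ∀ u v : V, u ≠ v → ((S u ∩ S v).Nonempty ↔ G.Adj u v)

/-- Helly property of subtrees of a tree: pairwise intersecting subtrees of a finite tree
have a common vertex. -/
theorem subtrees_helly {W ι : Type*} [Fintype W] [Finite ι] [Nonempty ι]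
    (T : SimpleGraph W) (hT : T.IsTree) (S : ι → Set W)
    (hconn : ∀ i : ι, (T.induce (S i)).Connected)
    (hpair : ∀ i j : ι, (S i ∩ S j).Nonempty) :
    (⋂ i : ι, S i).Nonempty := by
  classical
  cases nonempty_fintype ι
  set F := Finset.univ.image S with hF
  have hcl : ∀ A ∈ F, HellyAux.PathClosed hT A := by
    intro A hA
    obtain ⟨i, _, rfl⟩ := Finset.mem_image.mp hA
    exact HellyAux.pathClosed_of_connected hT (hconn i)
  have hp : ∀ A ∈ F, ∀ B ∈ F, (A ∩ B).Nonempty := by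
    intro A hA B hB
    obtain ⟨i, _, rfl⟩ := Finset.mem_image.mp hA
    obtain ⟨j, _, rfl⟩ := Finset.mem_image.mp hB
    exact hpair i j
  have hne : F.Nonempty := by
    refine ⟨S (Classical.arbitrary ι), ?_⟩
    exact Finset.mem_image_of_mem S (Finset.mem_univ _)
  obtain ⟨x, hx⟩ := HellyAux.helly_finset hT F.card F le_rfl hne hcl hp
  exact ⟨x, Set.mem_iInter.mpr fun i =>
    hx (S i) (Finset.mem_coe.mpr (Finset.mem_image_of_mem S (Finset.mem_univ i)))⟩
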